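/- The absolute value map |·| : ℝ → ℝ is twice epi-differentiable at every x ∈ ℝ for every y ∈ ∂|·|(x), with second-order epi-derivative the indicator function I_{K_{x,y}}. Precisely, let δ_t²(z) := (|x + t z| − |x| − t y z)/t² for t > 0 and z ∈ ℝ. Then for every z ∈ ℝ: (1) if z ∈ K_{x,y}, there exists a family (z_t)_{t>0} converging to z as t → 0⁺ with limsup_{t→0⁺} δ_t²(z_t) ≤ 0; (2) for every family (z_t)_{t>0} converging to z as t → 0⁺: if z ∈ K_{x,y} then liminf_{t→0⁺} δ_t²(z_t) ≥ 0, and if z ∉ K_{x,y} then δ_t²(z_t) tends to +∞ as t → 0⁺. -/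

import Mathlib

open Filter Topology Set

/-- The set `K_{x,y}` associated with the second-order epi-derivative of the absolute value. -/
def Kset (x y : ℝ) : Set ℝ :=
  if x ≠ 0 then Set.univ
  else if y = 1 then Set.Ici 0
  else if y = -1 then Set.Iic 0
  else {0}

/-- The absolute value is twice epi-differentiable at any `x` for any `y ∈ ∂|·|(x)`, with
second-order epi-derivative the indicator function of `K_{x,y}`: the family of second-order
difference quotients `δ_t²(z) = (|x + t z| - |x| - t y z)/t²` Mosco epi-converges to
`I_{K_{x,y}}` as `t → 0⁺`. -/
theorem abs_twice_epi_differentiable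
    (x y : ℝ) (hy : ∀ w : ℝ, y * (w - x) ≤ |w| - |x|) (z : ℝ) :
    -- (1) recovery family: if `z ∈ K_{x,y}`, there is a family converging to `z`
    -- whose difference quotients have `limsup ≤ 0 = I_{K_{x,y}}(z)`
    (z ∈ Kset x y → ∃ zt : ℝ → ℝ, Tendsto zt (𝓝[>] (0 : ℝ)) (𝓝 z) ∧
      Filter.limsup
        (fun t : ℝ => (((|x + t * zt t| - |x| - t * y * zt t) / t ^ 2 : ℝ) : EReal))
        (𝓝[>] (0 : ℝ)) ≤ 0) ∧
    -- (2) lower bound: along any family converging to `z`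
    (∀ zt : ℝ → ℝ, Tendsto zt (𝓝[>] (0 : ℝ)) (𝓝 z) →
      (z ∈ Kset x y →
        (0 : EReal) ≤ Filter.liminf
          (fun t : ℝ => (((|x + t * zt t| - |x| - t * y * zt t) / t ^ 2 : ℝ) : EReal))
          (𝓝[>] (0 : ℝ))) ∧
      (z ∉ Kset x y →
        Tendsto (fun t : ℝ => (|x + t * zt t| - |x| - t * y * zt t) / t ^ 2)
          (𝓝[>] (0 : ℝ)) atTop)) := by
  -- the difference quotient is always nonnegative, thanks to the subgradient inequality
  have hq : ∀ (w t : ℝ), 0 < t →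
      (0:ℝ) ≤ (|x + t * w| - |x| - t * y * w) / t ^ 2 := by
    intro w t ht
    have h := hy (x + t * w)
    have hnum : 0 ≤ |x + t * w| - |x| - t * y * w := by nlinarith [hy (x + t * w)]
    exact div_nonneg hnum (by positivity)
  -- |y| ≤ 1
  have hy1 : y ≤ 1 := by
    have h := hy (x + 1)
    have := abs_add_le x 1
    simp at this
    nlinarith
  have hy2 : -1 ≤ y := by
    have h := hy (x - 1)
    have := abs_sub x (1:ℝ)
    have h2 : |x - 1| ≤ |x| + 1 := by
      calc |x - 1| ≤ |x| + |(-1:ℝ)| := by simpa using abs_sub x 1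
        _ = |x| + 1 := by norm_num
    nlinarith
  have hyx : |x| ≤ y * x := by
    have h := hy 0
    simp at h
    nlinarith
  -- the numerator vanishes eventually for the constant family when z ∈ Kset
  have hzero : z ∈ Kset x y → ∀ᶠ t in 𝓝[>] (0:ℝ),
      |x + t * z| - |x| - t * y * z = 0 := by
    intro hz
    by_cases hx : x = 0
    · -- x = 0 : numerator is identically 0 on membership
      have hmem : |z| = y * z := by
        subst hx
        simp only [Kset, ne_eq, not_true_eq_false, if_false] at hz
        by_cases h1 : y = 1
        · subst h1
          rw [if_pos rfl] at hz
          rw [abs_of_nonneg hz]; ring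
        · rw [if_neg h1] at hz
          by_cases h2 : y = -1
          · subst h2
            rw [if_pos rfl] at hz
            rw [abs_of_nonpos hz]; ring
          · rw [if_neg h2] at hz
            simp only [Set.mem_singleton_iff] at hz
            subst hz; simp
      filter_upwards [self_mem_nhdsWithin] with t ht
      subst hx
      simp only [zero_add, abs_zero]
      rw [abs_mul, abs_of_pos ht, hmem]
      ring
    · -- x ≠ 0 : for small t, x + t z has the same sign as x
      have hxx : 0 < |x| := abs_pos.mpr hx
      have htend : Tendsto (fun t : ℝ => t * |z|) (𝓝[>] (0:ℝ)) (𝓝 (0 * |z|)) :=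
        (tendsto_id.mono_left nhdsWithin_le_nhds).mul_const |z|
      have hsmall : ∀ᶠ t in 𝓝[>] (0:ℝ), t * |z| < |x| := by
        apply htend.eventually_lt_const
        simpa using hxx
      filter_upwards [hsmall, self_mem_nhdsWithin] with t hts ht
      rcases lt_or_gt_of_ne hx with hneg | hpos
      · -- x < 0 : y = -1
        have hyv : y = -1 := by
          rw [abs_of_neg hneg] at hyx
          nlinarith
        have : x + t * z < 0 := by
          have : t * z ≤ t * |z| := by
            have := le_abs_self z
            nlinarith [(le_of_lt (show (0:ℝ) < t from ht))]
          have := abs_of_neg hneg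
          nlinarith
        rw [abs_of_neg this, abs_of_neg hneg, hyv]; ring
      · -- x > 0 : y = 1
        have hyv : y = 1 := by
          rw [abs_of_pos hpos] at hyx
          nlinarith
        have : 0 < x + t * z := by
          have : -(t * z) ≤ t * |z| := by
            have := neg_abs_le z
            nlinarith [(le_of_lt (show (0:ℝ) < t from ht))]
          have := abs_of_pos hpos
          nlinarith
        rw [abs_of_pos this, abs_of_pos hpos, hyv]; ring
  constructor
  · -- recovery family : constant z
    intro hz
    refine ⟨fun _ => z, tendsto_const_nhds, ?_⟩
    refine Filter.limsup_le_of_le Filter.isCobounded_le_of_bot ?_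
    filter_upwards [hzero hz] with t ht
    rw [ht]
    simp
  · intro zt hzt
    constructor
    · -- liminf ≥ 0
      intro _
      refine Filter.le_liminf_of_le Filter.isCobounded_ge_of_top ?_
      filter_upwards [self_mem_nhdsWithin] with t ht
      exact_mod_cast hq (zt t) t ht
    · -- blow-up outside Kset
      intro hz
      have hx : x = 0 := by
        by_contra hx
        exact hz (by simp [Kset, hx])
      subst hx
      -- the limit c = |z| - y z is positive
      have hc : 0 < |z| - y * z := by
        simp only [Kset, ne_eq, not_true_eq_false, if_false] at hz
        by_cases h1 : y = 1
        · subst h1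
          rw [if_pos rfl] at hz
          simp only [Set.mem_Ici, not_le] at hz
          rw [abs_of_neg hz]; nlinarith
        · rw [if_neg h1] at hz
          by_cases h2 : y = -1
          · subst h2
            rw [if_pos rfl] at hz
            simp only [Set.mem_Iic, not_le] at hz
            rw [abs_of_pos hz]; nlinarith
          · rw [if_neg h2] at hz
            simp only [Set.mem_singleton_iff] at hz
            rcases lt_or_gt_of_ne hz with h | h
            · rw [abs_of_neg h]
              have : -1 < y := lt_of_le_of_ne hy2 (Ne.symm h2)
              nlinarith
            · rw [abs_of_pos h]
              have : y < 1 := lt_of_le_of_ne hy1 h1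
              nlinarith
      have hf : Tendsto (fun t : ℝ => |zt t| - y * zt t) (𝓝[>] (0:ℝ))
          (𝓝 (|z| - y * z)) := by
        exact (hzt.abs.sub (hzt.const_mul y))
      have hmain : Tendsto (fun t : ℝ => (|zt t| - y * zt t) * t⁻¹)
          (𝓝[>] (0:ℝ)) atTop :=
        hf.pos_mul_atTop hc tendsto_inv_nhdsGT_zero
      apply hmain.congr'
      filter_upwards [self_mem_nhdsWithin] with t ht
      have ht' : (t:ℝ) ≠ 0 := ne_of_gt ht
      simp only [zero_add, abs_zero]
      rw [abs_mul, abs_of_pos (show (0:ℝ) < t from ht)]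
      field_simp
      ring
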